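/- For 0 < a < 1, define φ_a(y) = (42y^{10} - Ay^8 + By^6 - Cy^4 + Dy^2 - a^2(a+1))/(8y^3(2y^2+(a+1))^3) (so C_a(iy) = iφ_a(y)). Then φ_a has exactly one root in (0,1), and hence C_a has exactly two purely imaginary roots. -/
import Mathlib


noncomputable def Ca (a : ℂ) (z : ℂ) : ℂ :=
  (42 * z ^ 10 + (-51 * (a + 1)) * z ^ 8 + (4 * (5 * a ^ 2 + 3 * a + 5)) * z ^ 6
      + (-3 * (a ^ 3 - 7 * a ^ 2 - 7 * a + 1)) * z ^ 4
      + (-6 * a * (a ^ 2 + 3 * a + 1)) * z ^ 2 + a ^ 2 * (a + 1))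
    / (8 * z ^ 3 * (2 * z ^ 2 - (a + 1)) ^ 3)

/-- `φ_a`, the restriction of `C_a` to the imaginary axis: `C_a(iy) = i φ_a(y)`. -/
noncomputable def phiA (a : ℝ) (y : ℝ) : ℝ :=
  (42 * y ^ 10 + 51 * (a + 1) * y ^ 8 + 4 * (5 * a ^ 2 + 3 * a + 5) * y ^ 6
      + 3 * (a ^ 3 - 7 * a ^ 2 - 7 * a + 1) * y ^ 4
      - 6 * a * (a ^ 2 + 3 * a + 1) * y ^ 2 - a ^ 2 * (a + 1))
    / (8 * y ^ 3 * (2 * y ^ 2 + (a + 1)) ^ 3)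

/-- Numerator of `phiA`. -/
def nA (a : ℝ) (y : ℝ) : ℝ :=
  42 * y ^ 10 + 51 * (a + 1) * y ^ 8 + 4 * (5 * a ^ 2 + 3 * a + 5) * y ^ 6
      + 3 * (a ^ 3 - 7 * a ^ 2 - 7 * a + 1) * y ^ 4
      - 6 * a * (a ^ 2 + 3 * a + 1) * y ^ 2 - a ^ 2 * (a + 1)

lemma nA_unique (a : ℝ) (ha0 : 0 < a) {y1 y2 : ℝ} (h1 : 0 < y1) (h12 : y1 < y2)
    (hn1 : nA a y1 = 0) (hn2 : nA a y2 = 0) : False := by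
  have h2 : 0 < y2 := h1.trans h12
  have key : y1 ^ 4 * nA a y2 - y2 ^ 4 * nA a y1 =
      42 * (y1 ^ 4 * y2 ^ 4) * (y2 ^ 6 - y1 ^ 6)
      + 51 * (a + 1) * (y1 ^ 4 * y2 ^ 4) * (y2 ^ 4 - y1 ^ 4)
      + 4 * (5 * a ^ 2 + 3 * a + 5) * (y1 ^ 4 * y2 ^ 4) * (y2 ^ 2 - y1 ^ 2)
      + 6 * a * (a ^ 2 + 3 * a + 1) * (y1 ^ 2 * y2 ^ 2) * (y2 ^ 2 - y1 ^ 2)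
      + a ^ 2 * (a + 1) * (y2 ^ 4 - y1 ^ 4) := by
    unfold nA; ring
  rw [hn1, hn2] at key
  have p2 : 0 < y2 ^ 2 - y1 ^ 2 := sub_pos.mpr (by exact pow_lt_pow_left₀ h12 h1.le (by norm_num))
  have p4 : 0 < y2 ^ 4 - y1 ^ 4 := sub_pos.mpr (by exact pow_lt_pow_left₀ h12 h1.le (by norm_num))
  have p6 : 0 < y2 ^ 6 - y1 ^ 6 := sub_pos.mpr (by exact pow_lt_pow_left₀ h12 h1.le (by norm_num))
  have q1 : 0 < y1 ^ 4 * y2 ^ 4 := by positivity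
  have q2 : 0 < y1 ^ 2 * y2 ^ 2 := by positivity
  nlinarith [mul_pos q1 p6, mul_pos q1 p4, mul_pos q1 p2, mul_pos q2 p2,
    mul_pos (mul_pos ha0 q2) p2, mul_pos (mul_pos (mul_pos ha0 ha0) (by linarith : (0:ℝ) < a+1)) p4]

lemma nA_exists (a : ℝ) (ha0 : 0 < a) (ha1 : a < 1) :
    ∃ c ∈ Set.Ioo (0:ℝ) 1, nA a c = 0 := by
  have hcont : ContinuousOn (nA a) (Set.Icc 0 1) := by
    apply Continuous.continuousOn; unfold nA; continuity
  have h0 : nA a 0 < 0 := by unfold nA; nlinarith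
  have h1 : 0 < nA a 1 := by unfold nA; nlinarith
  have := intermediate_value_Ioo (by norm_num : (0:ℝ) ≤ 1) hcont
    (Set.mem_Ioo.mpr ⟨h0, h1⟩)
  obtain ⟨c, hc, hceq⟩ := this
  exact ⟨c, hc, hceq⟩

lemma phiA_eq_zero_iff (a : ℝ) (ha0 : 0 < a) {y : ℝ} (hy : 0 < y) :
    phiA a y = 0 ↔ nA a y = 0 := by
  have hd : 8 * y ^ 3 * (2 * y ^ 2 + (a + 1)) ^ 3 ≠ 0 := by positivity
  unfold phiA nA
  rw [div_eq_zero_iff]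
  constructor
  · rintro (h | h)
    · linarith
    · exact absurd h hd
  · intro h; left; linarith

lemma nA_even (a t : ℝ) : nA a (-t) = nA a t := by unfold nA; ring

lemma Ca_I_mul (a : ℝ) (ha0 : 0 < a) {t : ℝ} (ht : t ≠ 0) :
    Ca (a : ℂ) (Complex.I * t) = 0 ↔ nA a t = 0 := by
  have h2 : (Complex.I * (t:ℂ)) ^ 2 = -((t:ℂ) ^ 2) := by
    rw [mul_pow, Complex.I_sq]; ring
  have hnum : 42 * (Complex.I * (t:ℂ)) ^ 10 + (-51 * ((a:ℂ) + 1)) * (Complex.I * (t:ℂ)) ^ 8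
      + (4 * (5 * (a:ℂ) ^ 2 + 3 * (a:ℂ) + 5)) * (Complex.I * (t:ℂ)) ^ 6
      + (-3 * ((a:ℂ) ^ 3 - 7 * (a:ℂ) ^ 2 - 7 * (a:ℂ) + 1)) * (Complex.I * (t:ℂ)) ^ 4
      + (-6 * (a:ℂ) * ((a:ℂ) ^ 2 + 3 * (a:ℂ) + 1)) * (Complex.I * (t:ℂ)) ^ 2
      + (a:ℂ) ^ 2 * ((a:ℂ) + 1) = -((nA a t : ℝ) : ℂ) := by
    rw [show (Complex.I * (t:ℂ)) ^ 10 = ((Complex.I * (t:ℂ)) ^ 2) ^ 5 by ring,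
      show (Complex.I * (t:ℂ)) ^ 8 = ((Complex.I * (t:ℂ)) ^ 2) ^ 4 by ring,
      show (Complex.I * (t:ℂ)) ^ 6 = ((Complex.I * (t:ℂ)) ^ 2) ^ 3 by ring,
      show (Complex.I * (t:ℂ)) ^ 4 = ((Complex.I * (t:ℂ)) ^ 2) ^ 2 by ring, h2]
    push_cast [nA]
    ring
  have hden : 8 * (Complex.I * (t:ℂ)) ^ 3 * (2 * (Complex.I * (t:ℂ)) ^ 2 - ((a:ℂ) + 1)) ^ 3 ≠ 0 := by
    apply mul_ne_zero
    · apply mul_ne_zero (by norm_num)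
      apply pow_ne_zero
      simp [Complex.ext_iff, ht]
    · apply pow_ne_zero
      rw [h2]
      intro h
      have : ((2 * t ^ 2 + (a + 1) : ℝ) : ℂ) = 0 := by push_cast; linear_combination -h
      have h2' : (2 * t ^ 2 + (a + 1) : ℝ) = 0 := by exact_mod_cast this
      nlinarith
  unfold Ca
  rw [div_eq_zero_iff]
  constructor
  · rintro (h | h)
    · rw [hnum] at h
      have : ((nA a t : ℝ) : ℂ) = 0 := by linear_combination -h
      exact_mod_cast this
    · exact absurd h hden
  · intro h; left; rw [hnum, h]; simp

theorem stmt16 (a : ℝ) (ha0 : 0 < a) (ha1 : a < 1) :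
    (∃! y : ℝ, y ∈ Set.Ioo (0 : ℝ) 1 ∧ phiA a y = 0) ∧
    (∃ y : ℝ, 0 < y ∧ ∀ z : ℂ,
      (z.re = 0 ∧ z ≠ 0 ∧ Ca (a : ℂ) z = 0) ↔
        (z = Complex.I * (y : ℂ) ∨ z = -(Complex.I * (y : ℂ)))) := by
  obtain ⟨c, hc, hceq⟩ := nA_exists a ha0 ha1
  obtain ⟨hc0, hc1⟩ := hc
  -- uniqueness of positive root
  have huniq : ∀ t : ℝ, 0 < t → nA a t = 0 → t = c := by
    intro t ht hnt
    rcases lt_trichotomy t c with h | h | h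
    · exact absurd (nA_unique a ha0 ht h hnt hceq) (fun x => x)
    · exact h
    · exact absurd (nA_unique a ha0 hc0 h hceq hnt) (fun x => x)
  constructor
  · refine ⟨c, ⟨⟨hc0, hc1⟩, (phiA_eq_zero_iff a ha0 hc0).mpr hceq⟩, ?_⟩
    rintro y ⟨⟨hy0, hy1⟩, hy⟩
    exact huniq y hy0 ((phiA_eq_zero_iff a ha0 hy0).mp hy)
  · refine ⟨c, hc0, fun z => ?_⟩
    constructor
    · rintro ⟨hre, hz0, hCa⟩
      have hz : z = Complex.I * (z.im : ℂ) := by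
        apply Complex.ext <;> simp [hre]
      have ht0 : z.im ≠ 0 := by
        intro h; apply hz0; rw [hz, h]; simp
      rw [hz] at hCa
      have hn : nA a z.im = 0 := (Ca_I_mul a ha0 ht0).mp hCa
      rcases ht0.lt_or_gt with h | h
      · right
        have : -z.im = c := huniq (-z.im) (by linarith) (by rw [nA_even]; exact hn)
        rw [hz, show (z.im : ℂ) = -((c:ℝ):ℂ) by rw [← this]; push_cast; ring]
        ring
      · left
        have : z.im = c := huniq z.im h hn
        rw [hz, this]
    · rintro (h | h) <;> subst h
      · refine ⟨by simp, ?_, (Ca_I_mul a ha0 (ne_of_gt hc0)).mpr hceq⟩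
        simp [Complex.ext_iff, ne_of_gt hc0]
      · refine ⟨by simp, ?_, ?_⟩
        · simp [Complex.ext_iff, ne_of_gt hc0]
        · rw [show -(Complex.I * ((c:ℝ):ℂ)) = Complex.I * ((-c : ℝ):ℂ) by push_cast; ring]
          exact (Ca_I_mul a ha0 (by simpa using ne_of_gt hc0 : (-c:ℝ) ≠ 0)).mpr
            (by rw [nA_even]; exact hceq)
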